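/- Let t ≥ 2 be an integer and let k be a positive rational number such that 2k is an integer. Then k · t² · ∏_{p prime, p ∣ t} (1 + p⁻²) = 10 if and only if (t, k) = (2, 2), (t, k) = (3, 1), or (t, k) = (4, 1/2). -/
import Mathlib

lemma pf2' : (2 : ℕ).primeFactors = {2} := Nat.Prime.primeFactors Nat.prime_two

lemma pf3' : (3 : ℕ).primeFactors = {3} := Nat.Prime.primeFactors Nat.prime_three

lemma pf4' : (4 : ℕ).primeFactors = {2} := by
  have : (4 : ℕ) = 2 ^ 2 := by norm_num
  rw [this, Nat.primeFactors_prime_pow two_ne_zero Nat.prime_two]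

/-- Let `t ≥ 2` be an integer and let `k` be a positive rational number
such that `2k` is an integer. Then `k · t² · ∏_{p prime, p ∣ t} (1 + p⁻²) = 10` if and only if
`(t, k) = (2, 2)`, `(t, k) = (3, 1)`, or `(t, k) = (4, 1/2)`. -/
theorem weight_classification (t : ℕ) (ht : 2 ≤ t) (k : ℚ) (hk : 0 < k)
    (hk2 : ∃ m : ℤ, 2 * k = (m : ℚ)) :
    k * (t : ℚ) ^ 2 * ∏ p ∈ t.primeFactors, (1 + ((p : ℚ) ^ 2)⁻¹) = 10 ↔
      (t = 2 ∧ k = 2) ∨ (t = 3 ∧ k = 1) ∨ (t = 4 ∧ k = 1 / 2) := by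
  constructor
  · intro h
    obtain ⟨m, hm⟩ := hk2
    have hm1 : (1 : ℤ) ≤ m := by
      have : (0 : ℚ) < (m : ℚ) := by rw [← hm]; linarith
      exact_mod_cast this
    have hkhalf : (1 : ℚ) / 2 ≤ k := by
      have : (1 : ℚ) ≤ (m : ℚ) := by exact_mod_cast hm1
      linarith [hm ▸ this]
    have hP : (1 : ℚ) ≤ ∏ p ∈ t.primeFactors, (1 + ((p : ℚ) ^ 2)⁻¹) := by
      calc (1 : ℚ) = ∏ _p ∈ t.primeFactors, 1 := Finset.prod_const_one.symm
        _ ≤ _ := Finset.prod_le_prod (fun p _ => zero_le_one) (fun p _ => le_add_of_nonneg_right (by positivity))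
    have ht2 : (t : ℚ) ^ 2 ≤ 20 := by
      have h1 : k * (t : ℚ) ^ 2 * 1 ≤ k * (t : ℚ) ^ 2 *
          ∏ p ∈ t.primeFactors, (1 + ((p : ℚ) ^ 2)⁻¹) := by
        apply mul_le_mul_of_nonneg_left hP
        positivity
      have h2 : (1 / 2 : ℚ) * (t : ℚ) ^ 2 ≤ k * (t : ℚ) ^ 2 :=
        mul_le_mul_of_nonneg_right hkhalf (sq_nonneg _)
      linarith
    have ht4 : t ≤ 4 := by
      by_contra hlt
      push_neg at hlt
      have : (5 : ℚ) ≤ (t : ℚ) := by exact_mod_cast hlt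
      nlinarith
    interval_cases t
    · rw [pf2'] at h
      simp at h
      left; exact ⟨rfl, by linarith⟩
    · rw [pf3'] at h
      simp at h
      right; left; exact ⟨rfl, by linarith⟩
    · rw [pf4'] at h
      simp at h
      right; right; exact ⟨rfl, by linarith⟩
  · rintro (⟨ht', hk'⟩ | ⟨ht', hk'⟩ | ⟨ht', hk'⟩) <;> subst ht' <;> subst hk'
    · rw [pf2']; norm_num
    · rw [pf3']; norm_num
    · rw [pf4']; norm_num
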